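/- Let R be a commutative ring, E a finitely generated R-module, and φ : E → E a linear map. The following are equivalent: (1) E is the internal direct sum of range φ and ker φ (they are complementary submodules); (2) E = range φ + ker φ; (3) range φ = range (φ∘φ). -/

import Mathlib

theorem stmt8 {R : Type*} [CommRing R] {E : Type*}
    [AddCommGroup E] [Module R E] [Module.Finite R E] (φ : E →ₗ[R] E) :
    (IsCompl (LinearMap.range φ) (LinearMap.ker φ) ↔
      LinearMap.range φ ⊔ LinearMap.ker φ = ⊤) ∧
    (LinearMap.range φ ⊔ LinearMap.ker φ = ⊤ ↔
      LinearMap.range φ = LinearMap.range (φ ∘ₗ φ)) := by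
  have h23 : (LinearMap.range φ ⊔ LinearMap.ker φ = ⊤ ↔
      LinearMap.range φ = LinearMap.range (φ ∘ₗ φ)) := by
    constructor
    · intro h
      apply le_antisymm
      · rintro _ ⟨x, rfl⟩
        have hx : x ∈ LinearMap.range φ ⊔ LinearMap.ker φ := h ▸ Submodule.mem_top
        obtain ⟨y, hy, k, hk, rfl⟩ := Submodule.mem_sup.mp hx
        obtain ⟨z, rfl⟩ := hy
        refine ⟨z, ?_⟩
        simp [map_add, LinearMap.mem_ker.mp hk]
      · rintro _ ⟨x, rfl⟩; exact ⟨φ x, rfl⟩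
    · intro h
      rw [eq_top_iff]
      intro x _
      have hx : φ x ∈ LinearMap.range (φ ∘ₗ φ) := h ▸ ⟨x, rfl⟩
      obtain ⟨y, hy⟩ := hx
      refine Submodule.mem_sup.mpr ⟨φ y, ⟨y, rfl⟩, x - φ y, ?_, add_sub_cancel _ _⟩
      simp only [LinearMap.mem_ker, map_sub]
      simpa using sub_eq_zero.mpr hy.symm
  refine ⟨⟨fun h => h.sup_eq_top, fun h => ?_⟩, h23⟩
  refine ⟨?_, codisjoint_iff.mpr h⟩
  have hφ : ∀ x ∈ LinearMap.range φ, φ x ∈ LinearMap.range φ := fun x _ => ⟨x, rfl⟩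
  set ψ := φ.restrict hφ with hψ
  have hsurj : Function.Surjective ψ := by
    rintro ⟨z, hz⟩
    have : z ∈ LinearMap.range (φ ∘ₗ φ) := h23.mp h ▸ hz
    obtain ⟨y, hy⟩ := this
    exact ⟨⟨φ y, ⟨y, rfl⟩⟩, Subtype.ext hy⟩
  have hinj : Function.Injective ψ :=
    OrzechProperty.injective_of_surjective_endomorphism ψ hsurj
  rw [disjoint_iff]
  rw [Submodule.eq_bot_iff]
  rintro x ⟨hx1, hx2⟩
  have : ψ ⟨x, hx1⟩ = 0 := Subtype.ext (by simpa [ψ, LinearMap.restrict_apply] using hx2)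
  have := hinj (this.trans (map_zero ψ).symm)
  simpa using congrArg Subtype.val this
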